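/- Let SOL be a feasible schedule for instance A (with release dates ρ_j ≥ 0, sizes a_j, speeds v_i ≤ 1) and let A' be the rounded instance with release dates r'_j = (1+δ)^{⌈log_{1+δ}(ρ_j+β)⌉} where β = δ²·min_j a_j, sizes p_j = (1+δ)^{⌈log_{1+δ} a_j⌉}, and speeds s_i = (1+δ)^{⌊log_{1+δ} v_i⌋}. If υ ≥ (1+δ)³ and 0 < δ ≤ 1/36, then TA(SOL, υ) is a feasible schedule for A', and moreover it is timely: every job j starts no earlier than δ·p_j/s_i on its machine i. -/

import Mathlib

open Finset

/-- rounding up to the nearest integer power of `1+δ`. -/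
noncomputable def rUp (δ x : ℝ) : ℝ := (1 + δ) ^ (⌈Real.logb (1 + δ) x⌉)

/-- rounding down to the nearest integer power of `1+δ`. -/
noncomputable def rDown (δ x : ℝ) : ℝ := (1 + δ) ^ (⌊Real.logb (1 + δ) x⌋)

/-- feasibility of a schedule with release dates `ρ`, sizes `a`, speeds `v`. -/
def Feasible (n m : ℕ) (ρ a : Fin n → ℝ) (v : Fin m → ℝ)
    (M : Fin n → Fin m) (C : Fin n → ℝ) : Prop :=
  (∀ j, ρ j + a j / v (M j) ≤ C j) ∧
    ∀ j k, j ≠ k → M j = M k →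
      C j ≤ C k - a k / v (M k) ∨ C k ≤ C j - a j / v (M j)

lemma rUp_le_mul {δ x : ℝ} (hδ : 0 < δ) (hx : 0 < x) : rUp δ x ≤ (1 + δ) * x := by
  have h1 : (1:ℝ) < 1 + δ := by linarith
  have hb : (0:ℝ) < 1 + δ := by linarith
  have hlog := Real.rpow_logb hb (ne_of_gt h1) hx
  calc rUp δ x = (1 + δ) ^ ((⌈Real.logb (1 + δ) x⌉ : ℝ)) := by
        rw [rUp, Real.rpow_intCast]
    _ ≤ (1 + δ) ^ (Real.logb (1 + δ) x + 1) :=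
        Real.rpow_le_rpow_of_exponent_le h1.le (Int.ceil_lt_add_one _).le
    _ = (1 + δ) * x := by
        rw [Real.rpow_add hb, hlog, Real.rpow_one]; ring

lemma le_rUp {δ x : ℝ} (hδ : 0 < δ) (hx : 0 < x) : x ≤ rUp δ x := by
  have h1 : (1:ℝ) < 1 + δ := by linarith
  have hb : (0:ℝ) < 1 + δ := by linarith
  have hlog := Real.rpow_logb hb (ne_of_gt h1) hx
  calc x = (1 + δ) ^ (Real.logb (1 + δ) x) := hlog.symm
    _ ≤ (1 + δ) ^ ((⌈Real.logb (1 + δ) x⌉ : ℝ)) :=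
        Real.rpow_le_rpow_of_exponent_le h1.le (Int.le_ceil _)
    _ = rUp δ x := by rw [rUp, Real.rpow_intCast]

lemma rDown_le {δ x : ℝ} (hδ : 0 < δ) (hx : 0 < x) : rDown δ x ≤ x := by
  have h1 : (1:ℝ) < 1 + δ := by linarith
  have hb : (0:ℝ) < 1 + δ := by linarith
  have hlog := Real.rpow_logb hb (ne_of_gt h1) hx
  calc rDown δ x = (1 + δ) ^ ((⌊Real.logb (1 + δ) x⌋ : ℝ)) := by
        rw [rDown, Real.rpow_intCast]
    _ ≤ (1 + δ) ^ (Real.logb (1 + δ) x) :=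
        Real.rpow_le_rpow_of_exponent_le h1.le (Int.floor_le _)
    _ = x := hlog

lemma div_le_rDown {δ x : ℝ} (hδ : 0 < δ) (hx : 0 < x) : x / (1 + δ) ≤ rDown δ x := by
  have h1 : (1:ℝ) < 1 + δ := by linarith
  have hb : (0:ℝ) < 1 + δ := by linarith
  have hlog := Real.rpow_logb hb (ne_of_gt h1) hx
  calc x / (1 + δ) = (1 + δ) ^ (Real.logb (1 + δ) x - 1) := by
        rw [Real.rpow_sub hb, hlog, Real.rpow_one]
    _ ≤ (1 + δ) ^ ((⌊Real.logb (1 + δ) x⌋ : ℝ)) :=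
        Real.rpow_le_rpow_of_exponent_le h1.le (by linarith [Int.sub_one_lt_floor (Real.logb (1 + δ) x)])
    _ = rDown δ x := by rw [rDown, Real.rpow_intCast]

/-- if `SOL` is feasible for `A` and `υ ≥ (1+δ)³` with `0 < δ ≤ 1/36`,
then `TA(SOL,υ)` is feasible for the rounded instance `A'` (release dates
`(1+δ)^{⌈log(ρ_j+β)⌉}` with `β = δ²·min_j a_j`, sizes rounded up, speeds rounded
down), and it is timely: every job `j` starts no earlier than `δ p_j / s_{M j}`. -/
theorem time_augmented_feasible_rounded (n m : ℕ) (δ : ℝ)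
    (hδ0 : 0 < δ) (hδ : δ ≤ 1 / 36)
    (ρ a : Fin n → ℝ) (v : Fin m → ℝ)
    (hρ : ∀ j, 0 ≤ ρ j) (ha : ∀ j, 0 < a j) (hv : ∀ i, 0 < v i) (hv1 : ∀ i, v i ≤ 1)
    (amin : ℝ) (hmin : ∀ j, amin ≤ a j) (hach : ∃ j, a j = amin)
    (M : Fin n → Fin m) (C : Fin n → ℝ)
    (hfeas : Feasible n m ρ a v M C)
    (υ : ℝ) (hυ : (1 + δ) ^ 3 ≤ υ) :
    Feasible n m (fun j => rUp δ (ρ j + δ ^ 2 * amin)) (fun j => rUp δ (a j))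
        (fun i => rDown δ (v i)) M (fun j => υ * C j) ∧
      ∀ j, δ * rUp δ (a j) / rDown δ (v (M j)) ≤
        υ * C j - rUp δ (a j) / rDown δ (v (M j)) := by
  obtain ⟨j0, hj0⟩ := hach
  have hamin : 0 < amin := hj0 ▸ ha j0
  have hb : (0:ℝ) < 1 + δ := by linarith
  have hυpos : 0 < υ := lt_of_lt_of_le (by positivity) hυ
  have hps : ∀ j, rUp δ (a j) / rDown δ (v (M j)) ≤ (1 + δ) ^ 2 * (a j / v (M j)) := by
    intro j
    have hsd : 0 < rDown δ (v (M j)) := zpow_pos hb _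
    have h1 : rUp δ (a j) / rDown δ (v (M j)) ≤ ((1 + δ) * a j) / (v (M j) / (1 + δ)) :=
      div_le_div₀ (mul_pos hb (ha j)).le (rUp_le_mul hδ0 (ha j))
        (div_pos (hv (M j)) hb) (div_le_rDown hδ0 (hv (M j)))
    have h2 : ((1 + δ) * a j) / (v (M j) / (1 + δ)) = (1 + δ) ^ 2 * (a j / v (M j)) := by
      field_simp
    linarith [h2 ▸ h1]
  have hpspos : ∀ j, 0 < rUp δ (a j) / rDown δ (v (M j)) := by
    intro j
    exact div_pos (zpow_pos hb _) (zpow_pos hb _)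
  have hq : ∀ j, 0 < a j / v (M j) := fun j => div_pos (ha j) (hv (M j))
  have haq : ∀ j, a j ≤ a j / v (M j) := by
    intro j
    rw [le_div_iff₀ (hv (M j))]
    nlinarith [ha j, hv1 (M j), hv (M j)]
  have hυC : ∀ j, (1 + δ) ^ 3 * (ρ j + a j / v (M j)) ≤ υ * C j := by
    intro j
    exact mul_le_mul hυ (hfeas.1 j) (by linarith [hρ j, hq j]) hυpos.le
  constructor
  · constructor
    · intro j
      simp only
      have hr : rUp δ (ρ j + δ ^ 2 * amin) ≤ (1 + δ) * (ρ j + δ ^ 2 * amin) :=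
        rUp_le_mul hδ0 (by nlinarith [hρ j, mul_pos (mul_pos hδ0 hδ0) hamin])
      have hma : amin ≤ a j / v (M j) := le_trans (hmin j) (haq j)
      have hma2 : (1 + δ) * δ ^ 2 * amin ≤ (1 + δ) * δ ^ 2 * (a j / v (M j)) :=
        mul_le_mul_of_nonneg_left hma (mul_nonneg hb.le (sq_nonneg δ))
      have hδρ : 0 ≤ ((1 + δ) ^ 3 - (1 + δ)) * ρ j :=
        mul_nonneg (by nlinarith) (hρ j)
      have hδq : 0 ≤ (1 + δ) * δ * (a j / v (M j)) :=
        (mul_pos (mul_pos hb hδ0) (hq j)).le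
      nlinarith [hps j, hυC j, hr, hma2, hδρ, hδq]
    · intro j k hjk hM
      simp only
      rcases hfeas.2 j k hjk hM with h | h
      · left
        have h2 : υ * (a k / v (M k)) ≤ υ * (C k - C j) :=
          mul_le_mul_of_nonneg_left (by linarith) hυpos.le
        have h3 : (1 + δ) ^ 3 * (a k / v (M k)) ≤ υ * (a k / v (M k)) :=
          mul_le_mul_of_nonneg_right hυ (hq k).le
        nlinarith [hps k, mul_pos (mul_pos (mul_pos hb hb) hδ0) (hq k)]
      · right
        have h2 : υ * (a j / v (M j)) ≤ υ * (C j - C k) :=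
          mul_le_mul_of_nonneg_left (by linarith) hυpos.le
        have h3 : (1 + δ) ^ 3 * (a j / v (M j)) ≤ υ * (a j / v (M j)) :=
          mul_le_mul_of_nonneg_right hυ (hq j).le
        nlinarith [hps j, mul_pos (mul_pos (mul_pos hb hb) hδ0) (hq j)]
  · intro j
    have h4 := hps j
    have h5 := hυC j
    have h6 : (1 + δ) * (rUp δ (a j) / rDown δ (v (M j))) ≤
        (1 + δ) * ((1 + δ) ^ 2 * (a j / v (M j))) :=
      mul_le_mul_of_nonneg_left h4 hb.le
    have h7 : 0 ≤ (1 + δ) ^ 3 * ρ j := mul_nonneg (by positivity) (hρ j)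
    rw [mul_div_assoc]
    nlinarith [h6, h7]
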